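/- Let G be an undirected weighted graph on nodes {1,...,N} (N ≥ 2) with nonnegative edge weights w_{ij} = w_{ji} ≤ w_max, and suppose node 1 has at most q neighbors. Let L̄ be the grounded Laplacian obtained by deleting the first row and column of the graph Laplacian L. Then the smallest eigenvalue λ̄_1 of L̄ satisfies λ̄_1 ≤ q · w_max/(N−1). -/

import Mathlib

open Matrix Finset

/-- The smallest eigenvalue of the grounded Laplacian (the Laplacian with the
leader's row and column deleted) is at most `q · w_max / (N - 1)` when the
leader node has at most `q` neighbors and all weights are at most `w_max`. -/
theorem grounded_laplacian_smallest_eigenvalue_bound (N q : ℕ) (hN : 2 ≤ N)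
    (wmax : ℝ) (w : Fin N → Fin N → ℝ)
    (hsymm : ∀ i j, w i j = w j i)
    (hdiag : ∀ i, w i i = 0)
    (hnonneg : ∀ i j, 0 ≤ w i j)
    (hbd : ∀ i j, w i j ≤ wmax)
    (hq : (Finset.univ.filter (fun j : Fin N => w ⟨0, by omega⟩ j ≠ 0)).card ≤ q)
    (L : Matrix (Fin N) (Fin N) ℝ)
    (hL : ∀ i j, L i j =
      if i = j then ∑ k ∈ Finset.univ.filter (· ≠ i), w i k else -(w i j))
    (Lbar : Matrix (Fin (N - 1)) (Fin (N - 1)) ℝ)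
    (hLbar : ∀ i j, Lbar i j =
      L ⟨i.val + 1, by omega⟩ ⟨j.val + 1, by omega⟩)
    (hHerm : Lbar.IsHermitian) :
    (⨅ i, hHerm.eigenvalues i) ≤ (q : ℝ) * wmax / ((N : ℝ) - 1) := by
  obtain ⟨m, rfl⟩ : ∃ m, N = m + 1 := ⟨N - 1, by omega⟩
  have hm : 1 ≤ m := by omega
  have hwmax : 0 ≤ wmax := le_trans (hnonneg 0 0) (hbd 0 0)
  -- the all-ones vector
  set x : Fin (m + 1 - 1) → ℝ := fun _ => 1 with hx
  -- row sums of L are zero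
  have hrow : ∀ a : Fin (m + 1), ∑ j, L a j = 0 := by
    intro a
    rw [← Finset.sum_erase_add _ _ (Finset.mem_univ a), hL a a, if_pos rfl,
      ← Finset.filter_ne']
    have : ∑ j ∈ Finset.univ.filter (· ≠ a), L a j
        = ∑ j ∈ Finset.univ.filter (· ≠ a), -(w a j) := by
      refine Finset.sum_congr rfl fun j hj => ?_
      rw [hL, if_neg (Ne.symm (Finset.mem_filter.mp hj).2)]
    rw [this, Finset.sum_neg_distrib, neg_add_cancel]
  -- value of the quadratic form at the all-ones vector
  have hQ : x ⬝ᵥ Lbar *ᵥ x ≤ (q : ℝ) * wmax := by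
    have h1 : x ⬝ᵥ Lbar *ᵥ x = ∑ i : Fin (m + 1 - 1), ∑ j : Fin (m + 1 - 1), Lbar i j := by
      simp [dotProduct, mulVec, hx]
    have h2 : ∀ i : Fin (m + 1 - 1), ∑ j : Fin (m + 1 - 1), Lbar i j
        = w ⟨i.val + 1, by omega⟩ 0 := by
      intro i
      have hsucc : ∑ j : Fin (m + 1), L ⟨i.val + 1, by omega⟩ j
          = L ⟨i.val + 1, by omega⟩ 0
            + ∑ j : Fin m, L ⟨i.val + 1, by omega⟩ j.succ := Fin.sum_univ_succ _
      have hrw : ∑ j : Fin (m + 1 - 1), Lbar i j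
          = ∑ j : Fin m, L ⟨i.val + 1, by omega⟩ j.succ := by
        refine Finset.sum_congr rfl fun j _ => ?_
        rw [hLbar]
        rfl
      have hne : (⟨i.val + 1, by omega⟩ : Fin (m + 1)) ≠ 0 := by
        simp [Fin.ext_iff]
      rw [hrw]
      have := hrow ⟨i.val + 1, by omega⟩
      rw [hsucc] at this
      rw [hL, if_neg hne] at this
      linarith
    rw [h1]
    rw [Finset.sum_congr rfl fun i _ => h2 i]
    have h3 : ∑ i : Fin (m + 1 - 1), w ⟨i.val + 1, by omega⟩ 0
        = ∑ a : Fin (m + 1), w 0 a := by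
      rw [show (∑ a : Fin (m + 1), w 0 a) = ∑ a : Fin (m + 1), w a 0 from
          Finset.sum_congr rfl fun a _ => hsymm 0 a,
        Fin.sum_univ_succ (f := fun a : Fin (m + 1) => w a 0), hdiag 0, zero_add]
      rfl
    rw [h3]
    have h4 : ∑ a : Fin (m + 1), w 0 a
        = ∑ a ∈ Finset.univ.filter (fun j : Fin (m + 1) => w ⟨0, by omega⟩ j ≠ 0),
            w 0 a := by
      refine (Finset.sum_filter_of_ne fun a _ ha => ?_).symm
      exact ha
    rw [h4]
    calc ∑ a ∈ Finset.univ.filter (fun j : Fin (m + 1) => w ⟨0, by omega⟩ j ≠ 0), w 0 a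
        ≤ (Finset.univ.filter (fun j : Fin (m + 1) => w ⟨0, by omega⟩ j ≠ 0)).card • wmax :=
          Finset.sum_le_card_nsmul _ _ _ fun a _ => hbd 0 a
      _ ≤ (q : ℝ) * wmax := by
          rw [nsmul_eq_mul]
          exact mul_le_mul_of_nonneg_right (by exact_mod_cast hq) hwmax
  -- lower bound via the smallest eigenvalue
  set μ := ⨅ i, hHerm.eigenvalues i with hμ
  have hμle : ∀ i, μ ≤ hHerm.eigenvalues i := fun i =>
    ciInf_le (Finite.bddBelow_range _) i
  set U : Matrix (Fin (m + 1 - 1)) (Fin (m + 1 - 1)) ℝ :=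
    ((IsHermitian.eigenvectorUnitary hHerm :
      Matrix.unitaryGroup (Fin (m + 1 - 1)) ℝ) : Matrix (Fin (m + 1 - 1)) (Fin (m + 1 - 1)) ℝ)
    with hU
  set y : Fin (m + 1 - 1) → ℝ := Matrix.vecMul x U with hy
  have hyx : star U *ᵥ x = y := by
    ext i
    simp [hy, Matrix.mulVec, Matrix.vecMul, dotProduct,
      Matrix.star_eq_conjTranspose, Matrix.conjTranspose_apply, mul_comm]
  have hUU : U * star U = 1 :=
    (Matrix.mem_unitaryGroup_iff).mp (IsHermitian.eigenvectorUnitary hHerm).2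
  have hQform : x ⬝ᵥ Lbar *ᵥ x = ∑ i, hHerm.eigenvalues i * (y i * y i) := by
    conv_lhs => rw [hHerm.spectral_theorem, Unitary.conjStarAlgAut_apply]
    rw [← Matrix.mulVec_mulVec, ← Matrix.mulVec_mulVec, hyx,
      dotProduct_mulVec x U, ← hy]
    simp [dotProduct, Matrix.mulVec_diagonal, Function.comp]
    ring_nf
    exact Finset.sum_congr rfl fun i _ => by ring
  have hnorm : ∑ i, y i * y i = (m : ℝ) := by
    have h1 : x ᵥ* U ⬝ᵥ (star U *ᵥ x) = x ⬝ᵥ x := by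
      rw [← dotProduct_mulVec, Matrix.mulVec_mulVec, hUU, Matrix.one_mulVec]
    have h2 : x ⬝ᵥ x = (m : ℝ) := by
      simp [dotProduct, hx]
    calc ∑ i, y i * y i = x ᵥ* U ⬝ᵥ (star U *ᵥ x) := by rw [hyx]; rfl
      _ = (m : ℝ) := by rw [h1, h2]
  have hlow : μ * (m : ℝ) ≤ x ⬝ᵥ Lbar *ᵥ x := by
    rw [hQform, ← hnorm, Finset.mul_sum]
    refine Finset.sum_le_sum fun i _ => ?_
    exact mul_le_mul_of_nonneg_right (hμle i) (mul_self_nonneg _)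
  have hNm : ((m + 1 : ℕ) : ℝ) - 1 = (m : ℝ) := by push_cast; ring
  rw [hNm]
  rw [le_div_iff₀ (by positivity : (0 : ℝ) < (m : ℝ))]
  exact le_trans hlow hQ
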